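/- Let G=(V,E) be a directed graph on V=[p] containing all self-loops, and let H=(V',E') be a subgraph with V' ⊆ V and E' ⊆ E ∩ (V'×V') containing all self-loops of V'. If the graphical continuous Lyapunov model M_{G,C} is globally identifiable for some diagonal positive definite p×p matrix C, then M_{H,C'} is globally identifiable for every diagonal positive definite p'×p' matrix C', where p' = |V'|. -/

import Mathlib

open Matrix MeasureTheory

/-- A real square matrix is *stable* if every eigenvalue (over `ℂ`) has strictly
negative real part. -/
def IsStableMat {n : Type*} [Fintype n] [DecidableEq n] (M : Matrix n n ℝ) : Prop :=
  ∀ μ ∈ spectrum ℂ (M.map (algebraMap ℝ ℂ)), μ.re < 0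

/-- `M ∈ ℝ^E`: the matrix `M` is supported on the directed graph with edge set `E`,
i.e. `M j i = 0` whenever `(i, j) ∉ E`. -/
def InSupp {n : Type*} (E : Set (n × n)) (M : Matrix n n ℝ) : Prop :=
  ∀ i j : n, (i, j) ∉ E → M j i = 0

/-- The graphical continuous Lyapunov model `M_{G,C}`: positive definite matrices `S`
such that `M * S + S * Mᵀ + C = 0` for some `M ∈ ℝ^E`. -/
def LyapModel {n : Type*} [Fintype n] [DecidableEq n] (E : Set (n × n))
    (C : Matrix n n ℝ) : Set (Matrix n n ℝ) :=
  {S | S.PosDef ∧ ∃ M : Matrix n n ℝ, InSupp E M ∧ M * S + S * Mᵀ + C = 0}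

/-- Global identifiability: no two stable matrices supported on `E` yield the same
solution of the Lyapunov equation.  (Since for stable `M` the Lyapunov equation has a
unique positive definite solution `Σ(M,C)`, this is equivalent to every fiber
`F_{G,C}(M₀)` being the singleton `{M₀}`.) -/
def GloballyIdentifiable {n : Type*} [Fintype n] [DecidableEq n] (E : Set (n × n))
    (C : Matrix n n ℝ) : Prop :=
  ∀ M₁ M₂ : Matrix n n ℝ,
    InSupp E M₁ → IsStableMat M₁ → InSupp E M₂ → IsStableMat M₂ →
    ∀ S : Matrix n n ℝ, S.PosDef →
      M₁ * S + S * M₁ᵀ + C = 0 → M₂ * S + S * M₂ᵀ + C = 0 → M₁ = M₂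

/-- A directed graph is *simple* if it has no 2-cycles between distinct nodes. -/
def IsSimpleDigraph {n : Type*} (E : Set (n × n)) : Prop :=
  ∀ i j : n, i ≠ j → (i, j) ∈ E → (j, i) ∉ E

/-- The fiber `F_{G,C}(M₀)`: all stable matrices supported on `E` whose Lyapunov
solution coincides with that of `M₀`, i.e. some positive definite `S` solves the
Lyapunov equation for both `M₀` and `M`. -/
def Fiber {n : Type*} [Fintype n] [DecidableEq n] (E : Set (n × n))
    (C M₀ : Matrix n n ℝ) : Set (Matrix n n ℝ) :=
  {M | InSupp E M ∧ IsStableMat M ∧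
    ∃ S : Matrix n n ℝ, S.PosDef ∧ M₀ * S + S * M₀ᵀ + C = 0 ∧ M * S + S * Mᵀ + C = 0}

/-- The identification of the coordinate space `ℝ^{|E|}` with the matrices in `ℝ^E`:
the coordinate attached to an edge `(i,j)` is the entry `M j i`. -/
def edgeMatrix {p : ℕ} (E : Finset (Fin p × Fin p)) (f : E → ℝ) :
    Matrix (Fin p) (Fin p) ℝ :=
  fun j i => if h : (i, j) ∈ E then f ⟨(i, j), h⟩ else 0

/-- Generic identifiability: the set of parameter vectors `f ∈ ℝ^{|E|}` whose matrix
is stable but whose fiber is not a singleton is a Lebesgue null set. -/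
def GenericallyIdentifiable {p : ℕ} (E : Finset (Fin p × Fin p))
    (C : Matrix (Fin p) (Fin p) ℝ) : Prop :=
  volume {f : E → ℝ | IsStableMat (edgeMatrix E f) ∧
    Fiber (E : Set (Fin p × Fin p)) C (edgeMatrix E f) ≠ {edgeMatrix E f}} = 0

/-- for diagonal volatility matrices, global identifiability passes to
subgraphs obtained by removing both edges and vertices. -/
lemma sum_over_subtype {p : ℕ} (V' : Finset (Fin p)) {M : Type*} [AddCommMonoid M]
    (g : Fin p → M) (hg : ∀ j ∉ V', g j = 0) :
    ∑ j, g j = ∑ b : ↥V', g ↑b := by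
  rw [Finset.sum_coe_sort]
  exact (Finset.sum_subset (Finset.subset_univ V') (fun x _ hx => hg x hx)).symm

lemma mem_spectrum_iff_eigen {n : Type*} [Fintype n] [DecidableEq n]
    (A : Matrix n n ℂ) (μ : ℂ) :
    μ ∈ spectrum ℂ A ↔ ∃ v : n → ℂ, v ≠ 0 ∧ A *ᵥ v = μ • v := by
  rw [spectrum.mem_iff, Algebra.algebraMap_eq_smul_one,
    Matrix.isUnit_iff_isUnit_det, isUnit_iff_ne_zero, not_not,
    ← Matrix.exists_mulVec_eq_zero_iff]
  constructor
  · rintro ⟨v, hv, h⟩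
    rw [Matrix.sub_mulVec, Matrix.smul_mulVec, Matrix.one_mulVec, sub_eq_zero] at h
    exact ⟨v, hv, h.symm⟩
  · rintro ⟨v, hv, h⟩
    exact ⟨v, hv, by
      rw [Matrix.sub_mulVec, Matrix.smul_mulVec, Matrix.one_mulVec, h, sub_self]⟩

lemma posdef_diag_pos {n : Type*} [Fintype n] [DecidableEq n]
    {M : Matrix n n ℝ} (hM : M.PosDef) (i : n) : 0 < M i i := by
  have h := hM.dotProduct_mulVec_pos (x := Pi.single i 1) (by
    intro h
    simpa using congrFun h i)
  simpa [Matrix.mulVec, dotProduct, Pi.single_apply] using h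

noncomputable def bigMat {p : ℕ} (V' : Finset (Fin p)) (d c : Fin p → ℝ)
    (M : Matrix ↥V' ↥V' ℝ) : Matrix (Fin p) (Fin p) ℝ :=
  fun i j =>
    if hi : i ∈ V' then
      (if hj : j ∈ V' then d i * M ⟨i, hi⟩ ⟨j, hj⟩ / d j else 0)
    else (if i = j then -(c i) / 2 else 0)

noncomputable def bigSig {p : ℕ} (V' : Finset (Fin p)) (d : Fin p → ℝ)
    (S : Matrix ↥V' ↥V' ℝ) : Matrix (Fin p) (Fin p) ℝ :=
  fun i j =>
    if hi : i ∈ V' then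
      (if hj : j ∈ V' then d i * S ⟨i, hi⟩ ⟨j, hj⟩ * d j else 0)
    else (if i = j then 1 else 0)

lemma bigMat_insupp {p : ℕ} {V' : Finset (Fin p)} {E : Set (Fin p × Fin p)}
    {E' : Set (↥V' × ↥V')} (hloops : ∀ i : Fin p, (i, i) ∈ E)
    (hsub : ∀ a b : ↥V', (a, b) ∈ E' → ((a : Fin p), (b : Fin p)) ∈ E)
    (d c : Fin p → ℝ) {M : Matrix ↥V' ↥V' ℝ} (hM : InSupp E' M) :
    InSupp E (bigMat V' d c M) := by
  intro i j hij
  unfold bigMat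
  by_cases hj : j ∈ V'
  · simp only [dif_pos hj]
    by_cases hi : i ∈ V'
    · simp only [dif_pos hi]
      have h2 : (⟨i, hi⟩, (⟨j, hj⟩ : ↥V')) ∉ E' := fun h => hij (hsub _ _ h)
      rw [hM _ _ h2, mul_zero, zero_div]
    · simp only [dif_neg hi]
  · simp only [dif_neg hj]
    rw [if_neg]
    intro hji
    subst hji
    exact hij (hloops j)

lemma bigMat_stable {p : ℕ} {V' : Finset (Fin p)}
    {d c : Fin p → ℝ} (hd : ∀ i, d i ≠ 0) (hc : ∀ i, 0 < c i)
    {M : Matrix ↥V' ↥V' ℝ} (hM : IsStableMat M) :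
    IsStableMat (bigMat V' d c M) := by
  intro μ hμ
  rw [mem_spectrum_iff_eigen] at hμ
  obtain ⟨v, hv, hAv⟩ := hμ
  by_cases hout : ∃ i : Fin p, i ∉ V' ∧ v i ≠ 0
  · obtain ⟨i, hi, hvi⟩ := hout
    have h1 : (((bigMat V' d c M).map (algebraMap ℝ ℂ)) *ᵥ v) i
        = ((-(c i) / 2 : ℝ) : ℂ) * v i := by
      show (∑ j, ((bigMat V' d c M).map (algebraMap ℝ ℂ)) i j * v j) = _
      rw [Finset.sum_eq_single i]
      · simp [Matrix.map_apply, bigMat, dif_neg hi]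
      · intro b _ hb
        simp [Matrix.map_apply, bigMat, dif_neg hi, (Ne.symm hb : ¬ i = b)]
      · intro h; exact absurd (Finset.mem_univ i) h
    have h2 := congrFun hAv i
    rw [h1] at h2
    have h3 : ((-(c i) / 2 : ℝ) : ℂ) * v i = μ * v i := by
      rw [h2]; simp [Pi.smul_apply, smul_eq_mul]
    have h4 : μ = ((-(c i) / 2 : ℝ) : ℂ) := (mul_right_cancel₀ hvi h3).symm
    rw [h4, Complex.ofReal_re]
    linarith [hc i]
  · push_neg at hout
    set A := (bigMat V' d c M).map (algebraMap ℝ ℂ) with hA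
    obtain ⟨i0, hvi0⟩ := Function.ne_iff.mp hv
    have hi0 : i0 ∈ V' := by
      by_contra h; exact hvi0 (hout i0 h)
    set w : ↥V' → ℂ := fun a => v ↑a / ((d ↑a : ℝ) : ℂ) with hw
    have hdc : ∀ i : Fin p, ((d i : ℝ) : ℂ) ≠ 0 := fun i => by
      exact_mod_cast Complex.ofReal_ne_zero.mpr (hd i)
    have hwne : w ≠ 0 := by
      intro h
      have := congrFun h ⟨i0, hi0⟩
      simp only [hw, Pi.zero_apply] at this
      exact hvi0 (by
        have := (div_eq_zero_iff.mp this)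
        rcases this with h' | h'
        · exact h'
        · exact absurd h' (hdc i0))
    apply hM μ
    rw [mem_spectrum_iff_eigen]
    refine ⟨w, hwne, ?_⟩
    funext a
    have h2 := congrFun hAv ↑a
    have hsum : (A *ᵥ v) ↑a = ∑ b : ↥V', A ↑a ↑b * v ↑b := by
      show (∑ j, A ↑a j * v j) = _
      exact sum_over_subtype V' _ (fun j hj => by rw [hout j hj, mul_zero])
    rw [hsum] at h2
    have hterm : ∀ b : ↥V', A ↑a ↑b * v ↑b
        = ((d ↑a : ℝ) : ℂ) * (((M.map (algebraMap ℝ ℂ)) a b) * w b) := by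
      intro b
      have hva : ((d ↑b : ℝ) : ℂ) * w b = v ↑b := by
        rw [hw, ← mul_div_assoc, mul_comm, mul_div_assoc, div_self (hdc ↑b), mul_one]
      rw [← hva]
      simp only [hA, Matrix.map_apply, bigMat, dif_pos a.2, dif_pos b.2, Subtype.coe_eta]
      push_cast
      have hb := hdc ↑b
      field_simp
      linear_combination (((d ↑a : ℝ) : ℂ) * ((M a b : ℝ) : ℂ) * w b) * mul_inv_cancel₀ hb
    rw [Finset.sum_congr rfl (fun b _ => hterm b), ← Finset.mul_sum] at h2
    have hva : ((d ↑a : ℝ) : ℂ) * w a = v ↑a := by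
      rw [hw, ← mul_div_assoc, mul_comm, mul_div_assoc, div_self (hdc ↑a), mul_one]
    have h3 : (μ • v) ↑a = ((d ↑a : ℝ) : ℂ) * (μ * w a) := by
      simp only [Pi.smul_apply, smul_eq_mul, ← hva]; ring
    rw [h3] at h2
    have h4 := mul_left_cancel₀ (hdc ↑a) h2
    show (∑ b, (M.map (algebraMap ℝ ℂ)) a b * w b) = μ * w a
    exact h4

lemma bigSig_posdef {p : ℕ} {V' : Finset (Fin p)} {d : Fin p → ℝ}
    (hd : ∀ i, 0 < d i) {S : Matrix ↥V' ↥V' ℝ} (hS : S.PosDef) :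
    (bigSig V' d S).PosDef := by
  have hdne : ∀ i, d i ≠ 0 := fun i => (hd i).ne'
  rw [Matrix.posDef_iff_dotProduct_mulVec]
  constructor
  · -- Hermitian
    ext i j
    simp only [Matrix.conjTranspose_apply, star_trivial]
    unfold bigSig
    by_cases hi : i ∈ V' <;> by_cases hj : j ∈ V'
    · simp only [dif_pos hi, dif_pos hj]
      rw [← hS.1.apply ⟨i, hi⟩ ⟨j, hj⟩, star_trivial]
      ring
    · simp only [dif_pos hi, dif_neg hj]
      rw [if_neg (fun h : j = i => hj (h ▸ hi))]
    · simp only [dif_pos hj, dif_neg hi]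
      rw [if_neg (fun h : i = j => hi (h ▸ hj))]
    · simp only [dif_neg hi, dif_neg hj, eq_comm]
  · intro x hx
    rw [star_trivial]
    set y : ↥V' → ℝ := fun a => d ↑a * x ↑a with hy
    have hmv : ∀ i : Fin p, (bigSig V' d S *ᵥ x) i
        = if h : i ∈ V' then d i * (S *ᵥ y) ⟨i, h⟩ else x i := by
      intro i
      show (∑ j, bigSig V' d S i j * x j) = _
      by_cases hi : i ∈ V'
      · rw [dif_pos hi]
        rw [sum_over_subtype V' _ (fun j hj => by
          simp [bigSig, dif_pos hi, dif_neg hj])]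
        show (∑ b : ↥V', bigSig V' d S i ↑b * x ↑b) = _
        have : ∀ b : ↥V', bigSig V' d S i ↑b * x ↑b
            = d i * (S ⟨i, hi⟩ b * y b) := by
          intro b
          simp only [bigSig, dif_pos hi, dif_pos b.2, Subtype.coe_eta, hy]
          ring
        rw [Finset.sum_congr rfl (fun b _ => this b), ← Finset.mul_sum]
        rfl
      · rw [dif_neg hi]
        rw [Finset.sum_eq_single i]
        · simp [bigSig, dif_neg hi]
        · intro b _ hb
          simp [bigSig, dif_neg hi, (Ne.symm hb : ¬ i = b)]
        · intro h; exact absurd (Finset.mem_univ i) h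
    have hdot : x ⬝ᵥ (bigSig V' d S *ᵥ x)
        = y ⬝ᵥ (S *ᵥ y) + ∑ i ∈ V'ᶜ, x i ^ 2 := by
      show (∑ i, x i * (bigSig V' d S *ᵥ x) i) = _
      rw [← Finset.sum_add_sum_compl V' (fun i => x i * (bigSig V' d S *ᵥ x) i)]
      congr 1
      · rw [← Finset.sum_coe_sort V' (fun i => x i * (bigSig V' d S *ᵥ x) i)]
        apply Finset.sum_congr rfl
        intro b _
        rw [hmv ↑b, dif_pos b.2, Subtype.coe_eta]
        show x ↑b * (d ↑b * (S *ᵥ y) b) = y b * (S *ᵥ y) b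
        rw [hy]; ring
      · apply Finset.sum_congr rfl
        intro i hi
        rw [hmv i, dif_neg (Finset.mem_compl.mp hi)]
        ring
    rw [hdot]
    by_cases hy0 : y = 0
    · have hxV : ∀ i : Fin p, i ∈ V' → x i = 0 := by
        intro i hi
        have := congrFun hy0 ⟨i, hi⟩
        simp only [hy, Pi.zero_apply] at this
        exact (mul_eq_zero.mp this).resolve_left (hdne i)
      obtain ⟨i0, hxi0⟩ := Function.ne_iff.mp hx
      have hi0 : i0 ∉ V' := fun h => hxi0 (hxV i0 h)
      have h1 : y ⬝ᵥ (S *ᵥ y) = 0 := by rw [hy0]; simp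
      rw [h1, zero_add]
      apply Finset.sum_pos'
      · intro i _; positivity
      · exact ⟨i0, Finset.mem_compl.mpr hi0,
          lt_of_le_of_ne (sq_nonneg _) (Ne.symm (pow_ne_zero 2 hxi0))⟩
    · have h1 : 0 < y ⬝ᵥ (S *ᵥ y) := by
        have := hS.dotProduct_mulVec_pos hy0
        rwa [star_trivial] at this
      have h2 : 0 ≤ ∑ i ∈ V'ᶜ, x i ^ 2 := Finset.sum_nonneg (fun i _ => sq_nonneg _)
      linarith

lemma bigMat_lyap {p : ℕ} {V' : Finset (Fin p)} {d : Fin p → ℝ}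
    (hd : ∀ i, d i ≠ 0)
    {C : Matrix (Fin p) (Fin p) ℝ} (hdiagC : ∀ i j : Fin p, i ≠ j → C i j = 0)
    {C' : Matrix ↥V' ↥V' ℝ} (hdiagC' : ∀ a b : ↥V', a ≠ b → C' a b = 0)
    (hd2 : ∀ (i : Fin p) (h : i ∈ V'), d i * d i * C' ⟨i, h⟩ ⟨i, h⟩ = C i i)
    {M S : Matrix ↥V' ↥V' ℝ} (hL : M * S + S * Mᵀ + C' = 0) :
    bigMat V' d (fun i => C i i) M * bigSig V' d S
      + bigSig V' d S * (bigMat V' d (fun i => C i i) M)ᵀ + C = 0 := by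
  have hLe : ∀ a b : ↥V', (M * S) a b + (S * Mᵀ) a b + C' a b = 0 := by
    intro a b
    have : (M * S + S * Mᵀ + C') a b = (0 : Matrix ↥V' ↥V' ℝ) a b := by rw [hL]
    simpa [Matrix.add_apply] using this
  ext i j
  simp only [Matrix.add_apply, Matrix.mul_apply, Matrix.transpose_apply, Matrix.zero_apply]
  by_cases hi : i ∈ V' <;> by_cases hj : j ∈ V'
  · -- both in V'
    have h1 : (∑ k, bigMat V' d (fun i => C i i) M i k * bigSig V' d S k j)
        = d i * d j * (M * S) ⟨i, hi⟩ ⟨j, hj⟩ := by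
      rw [sum_over_subtype V' _ (fun k hk => by
        simp [bigMat, dif_pos hi, dif_neg hk])]
      rw [Matrix.mul_apply, Finset.mul_sum]
      apply Finset.sum_congr rfl
      intro b _
      simp only [bigMat, bigSig, dif_pos hi, dif_pos hj, dif_pos b.2, Subtype.coe_eta]
      field_simp [hd ↑b]
    have h2 : (∑ k, bigSig V' d S i k * bigMat V' d (fun i => C i i) M j k)
        = d i * d j * (S * Mᵀ) ⟨i, hi⟩ ⟨j, hj⟩ := by
      rw [sum_over_subtype V' _ (fun k hk => by
        simp [bigSig, dif_pos hi, dif_neg hk])]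
      rw [Matrix.mul_apply, Finset.mul_sum]
      apply Finset.sum_congr rfl
      intro b _
      simp only [bigMat, bigSig, Matrix.transpose_apply, dif_pos hi, dif_pos hj,
        dif_pos b.2, Subtype.coe_eta]
      field_simp [hd ↑b]
    rw [h1, h2]
    by_cases hij : i = j
    · subst hij
      have := hLe ⟨i, hi⟩ ⟨i, hi⟩
      have hC' : (M * S) ⟨i, hi⟩ ⟨i, hi⟩ + (S * Mᵀ) ⟨i, hi⟩ ⟨i, hi⟩ = -C' ⟨i, hi⟩ ⟨i, hi⟩ := by
        linarith
      have hd2' := hd2 i hi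
      linear_combination (d i * d i) * hC' - hd2' 
    · have hab : (⟨i, hi⟩ : ↥V') ≠ ⟨j, hj⟩ := fun h => hij (congrArg Subtype.val h)
      have := hLe ⟨i, hi⟩ ⟨j, hj⟩
      rw [hdiagC' _ _ hab] at this
      rw [hdiagC i j hij]
      have h0 : (M * S) ⟨i, hi⟩ ⟨j, hj⟩ + (S * Mᵀ) ⟨i, hi⟩ ⟨j, hj⟩ = 0 := by linarith
      linear_combination (d i * d j) * h0
  · -- i ∈ V', j ∉ V'
    have h1 : (∑ k, bigMat V' d (fun i => C i i) M i k * bigSig V' d S k j) = 0 := by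
      apply Finset.sum_eq_zero
      intro k _
      by_cases hk : k ∈ V'
      · simp [bigSig, dif_pos hk, dif_neg hj]
      · simp [bigMat, dif_pos hi, dif_neg hk]
    have h2 : (∑ k, bigSig V' d S i k * bigMat V' d (fun i => C i i) M j k) = 0 := by
      apply Finset.sum_eq_zero
      intro k _
      by_cases hk : k ∈ V'
      · simp [bigMat, dif_neg hj, if_neg (fun h : j = k => hj (h ▸ hk))]
      · simp [bigSig, dif_pos hi, dif_neg hk]
    rw [h1, h2, hdiagC i j (fun h => hj (h ▸ hi))]
    ring
  · -- i ∉ V', j ∈ V'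
    have h1 : (∑ k, bigMat V' d (fun i => C i i) M i k * bigSig V' d S k j) = 0 := by
      apply Finset.sum_eq_zero
      intro k _
      by_cases hk : k ∈ V'
      · simp [bigMat, dif_neg hi, if_neg (fun h : i = k => hi (h ▸ hk))]
      · simp [bigSig, dif_neg hk, if_neg (fun h : k = j => hk (h ▸ hj))]
    have h2 : (∑ k, bigSig V' d S i k * bigMat V' d (fun i => C i i) M j k) = 0 := by
      apply Finset.sum_eq_zero
      intro k _
      by_cases hk : k ∈ V'
      · simp [bigSig, dif_neg hi, if_neg (fun h : i = k => hi (h ▸ hk))]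
      · simp [bigMat, dif_pos hj, dif_neg hk]
    rw [h1, h2, hdiagC i j (fun h => hi (h ▸ hj))]
    ring
  · -- both outside V'
    have h1 : (∑ k, bigMat V' d (fun i => C i i) M i k * bigSig V' d S k j)
        = (-(C i i) / 2) * (if i = j then 1 else 0) := by
      rw [Finset.sum_eq_single i]
      · simp [bigMat, bigSig, dif_neg hi, dif_neg hj]
      · intro b _ hb
        simp [bigMat, dif_neg hi, if_neg (Ne.symm hb : ¬ i = b)]
      · intro h; exact absurd (Finset.mem_univ i) h
    have h2 : (∑ k, bigSig V' d S i k * bigMat V' d (fun i => C i i) M j k)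
        = (if j = i then -(C j j) / 2 else 0) := by
      rw [Finset.sum_eq_single i]
      · simp [bigSig, bigMat, dif_neg hi, dif_neg hj]
      · intro b _ hb
        simp [bigSig, dif_neg hi, if_neg (Ne.symm hb : ¬ i = b)]
      · intro h; exact absurd (Finset.mem_univ i) h
    rw [h1, h2]
    by_cases hij : i = j
    · subst hij
      norm_num
    · rw [if_neg hij, if_neg (Ne.symm hij), hdiagC i j hij]
      ring

theorem globally_identifiable_induced_subgraph_diagonal {p : ℕ}
    (E : Set (Fin p × Fin p)) (hloops : ∀ i : Fin p, (i, i) ∈ E)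
    (V' : Finset (Fin p)) (E' : Set (↥V' × ↥V'))
    (hloops' : ∀ v : ↥V', (v, v) ∈ E')
    (hsub : ∀ a b : ↥V', (a, b) ∈ E' → ((a : Fin p), (b : Fin p)) ∈ E)
    (C : Matrix (Fin p) (Fin p) ℝ) (hC : C.PosDef)
    (hdiagC : ∀ i j : Fin p, i ≠ j → C i j = 0)
    (hG : GloballyIdentifiable E C)
    (C' : Matrix ↥V' ↥V' ℝ) (hC' : C'.PosDef)
    (hdiagC' : ∀ a b : ↥V', a ≠ b → C' a b = 0) :
    GloballyIdentifiable E' C' := by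
  intro M₁ M₂ h₁s h₁st h₂s h₂st S hS hL₁ hL₂
  have hCpos : ∀ i, 0 < C i i := posdef_diag_pos hC
  have hC'pos : ∀ a : ↥V', 0 < C' a a := posdef_diag_pos hC'
  set d : Fin p → ℝ := fun i =>
    if h : i ∈ V' then Real.sqrt (C i i / C' ⟨i, h⟩ ⟨i, h⟩) else 1 with hd_def
  have hdpos : ∀ i, 0 < d i := by
    intro i
    by_cases h : i ∈ V'
    · simp only [hd_def, dif_pos h]
      exact Real.sqrt_pos.2 (div_pos (hCpos i) (hC'pos ⟨i, h⟩))
    · simp [hd_def, dif_neg h]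
  have hdne : ∀ i, d i ≠ 0 := fun i => (hdpos i).ne'
  have hd2 : ∀ (i : Fin p) (h : i ∈ V'), d i * d i * C' ⟨i, h⟩ ⟨i, h⟩ = C i i := by
    intro i h
    simp only [hd_def, dif_pos h]
    rw [Real.mul_self_sqrt (le_of_lt (div_pos (hCpos i) (hC'pos ⟨i, h⟩)))]
    exact div_mul_cancel₀ _ (hC'pos ⟨i, h⟩).ne'
  have key := hG (bigMat V' d (fun i => C i i) M₁) (bigMat V' d (fun i => C i i) M₂)
    (bigMat_insupp hloops hsub d _ h₁s)
    (bigMat_stable hdne hCpos h₁st)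
    (bigMat_insupp hloops hsub d _ h₂s)
    (bigMat_stable hdne hCpos h₂st)
    (bigSig V' d S) (bigSig_posdef hdpos hS)
    (bigMat_lyap hdne hdiagC hdiagC' hd2 hL₁)
    (bigMat_lyap hdne hdiagC hdiagC' hd2 hL₂)
  ext a b
  have h := congrFun (congrFun key ↑a) ↑b
  simp only [bigMat, dif_pos a.2, dif_pos b.2, Subtype.coe_eta] at h
  field_simp [hdne ↑a, hdne ↑b] at h
  exact h
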